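/- For s ≥ 2, the set of s-core partitions is a single orbit under the action of the affine symmetric group generated by the operators s_i (i ∈ ℤ/sℤ), where s_i simultaneously adds all addable nodes of residue i and removes all removable nodes of residue i; moreover an s-core never has both addable and removable nodes of the same residue i. -/

import Mathlib

/-- A partition: a weakly decreasing sequence of non-negative integers,
with finitely many nonzero terms (indices are 0-based; `parts i` is `λ_{i+1}`). -/
structure Partition' where
  parts : ℕ → ℕ
  antitone : ∀ i j : ℕ, i ≤ j → parts j ≤ parts i
  finite_support : ∃ N : ℕ, ∀ i : ℕ, N ≤ i → parts i = 0

/-- The beta-set `B(λ) = {λ_a - a : a ≥ 1}` of a partition. -/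
def betaSet (lam : Partition') : Set ℤ :=
  Set.range fun i : ℕ => (lam.parts i : ℤ) - (i + 1)

/-- The shifted set `S + c`. -/
def shiftSet (S : Set ℤ) (c : ℤ) : Set ℤ := (fun x => x + c) '' S

/-- `λ` is an `s`-core (beta-set characterisation). -/
def IsCore (lam : Partition') (s : ℕ) : Prop :=
  ∀ x ∈ betaSet lam, x - (s : ℤ) ∈ betaSet lam

/-- Row `r` (0-based) of `λ` has an addable node, namely `(r, λ_r + 1)`. -/
def AddableAt (lam : Partition') (r : ℕ) : Prop :=
  r = 0 ∨ lam.parts r < lam.parts (r - 1)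

/-- Row `r` (0-based) of `λ` has a removable node, namely `(r, λ_r)`. -/
def RemovableAt (lam : Partition') (r : ℕ) : Prop :=
  lam.parts (r + 1) < lam.parts r

/-- The `s`-residue of the addable node in row `r`: `(λ_r + 1) - (r + 1) = λ_r - r`. -/
def addRes (s : ℕ) (lam : Partition') (r : ℕ) : ZMod s :=
  (((lam.parts r : ℤ) - r : ℤ) : ZMod s)

/-- The `s`-residue of the removable node in row `r`: `λ_r - (r + 1)`. -/
def remRes (s : ℕ) (lam : Partition') (r : ℕ) : ZMod s :=
  (((lam.parts r : ℤ) - (r + 1) : ℤ) : ZMod s)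

instance (lam : Partition') (r : ℕ) : Decidable (AddableAt lam r) := by
  unfold AddableAt; infer_instance

instance (lam : Partition') (r : ℕ) : Decidable (RemovableAt lam r) := by
  unfold RemovableAt; infer_instance

/-- `μ = s_i(λ)`: `μ` is obtained from `λ` by adding all addable nodes of residue
`i` and removing all removable nodes of residue `i`. -/
def SiRel (s : ℕ) (i : ZMod s) (lam mu : Partition') : Prop :=
  ∀ r : ℕ, mu.parts r =
    if AddableAt lam r ∧ addRes s lam r = i then lam.parts r + 1
    else if RemovableAt lam r ∧ remRes s lam r = i then lam.parts r - 1
    else lam.parts r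

/-- The empty partition. -/
def emptyPartition : Partition' :=
  ⟨fun _ => 0, fun _ _ _ => le_refl 0, ⟨0, fun _ _ => rfl⟩⟩

/-- Reachability from `lam` by repeatedly applying operators `s_i`. -/
inductive Reach (s : ℕ) : Partition' → Partition' → Prop
  | refl (lam : Partition') : Reach s lam lam
  | step {lam mu nu : Partition'} (i : ZMod s) :
      SiRel s i lam mu → Reach s mu nu → Reach s lam nu

namespace Stmt17

def bfun (lam : Partition') (r : ℕ) : ℤ := (lam.parts r : ℤ) - (r + 1)

lemma mem_beta_iff {lam : Partition'} {x : ℤ} :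
    x ∈ betaSet lam ↔ ∃ r : ℕ, bfun lam r = x := Iff.rfl

lemma bfun_mem (lam : Partition') (r : ℕ) : bfun lam r ∈ betaSet lam := ⟨r, rfl⟩

lemma bfun_strictAnti (lam : Partition') : StrictAnti (bfun lam) := by
  apply strictAnti_nat_of_succ_lt
  intro r
  have := lam.antitone r (r + 1) (by omega)
  unfold bfun; push_cast; omega

lemma bfun_succ_lt (lam : Partition') (r : ℕ) : bfun lam (r + 1) < bfun lam r :=
  bfun_strictAnti lam (by omega)

lemma addable_iff (lam : Partition') (r : ℕ) :
    AddableAt lam r ↔ bfun lam r + 1 ∉ betaSet lam := by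
  constructor
  · rintro h hmem
    rw [mem_beta_iff] at hmem
    obtain ⟨r', hr'⟩ := hmem
    have hlt : bfun lam r < bfun lam r' := by omega
    have hrr : r' < r := (bfun_strictAnti lam).lt_iff_gt.mp hlt
    rcases h with h0 | hlt'
    · omega
    · match r, hrr with
      | (m+1), hrr =>
        have h3 : lam.parts (m+1) < lam.parts m := by simpa using hlt'
        have h2 : bfun lam (m+1) + 2 ≤ bfun lam m := by
          unfold bfun; push_cast; omega
        have h4 : bfun lam r' < bfun lam m := by omega
        have : m < r' := (bfun_strictAnti lam).lt_iff_gt.mp h4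
        omega
  · intro h
    match r with
    | 0 => exact Or.inl rfl
    | (m+1) =>
      right
      have hle := lam.antitone m (m+1) (by omega)
      rcases eq_or_lt_of_le hle with heq | hlt
      · exfalso; apply h
        rw [mem_beta_iff]
        refine ⟨m, ?_⟩
        unfold bfun; push_cast; omega
      · simpa using hlt

lemma removable_iff (lam : Partition') (r : ℕ) :
    RemovableAt lam r ↔ bfun lam r - 1 ∉ betaSet lam := by
  constructor
  · rintro h hmem
    rw [mem_beta_iff] at hmem
    obtain ⟨r', hr'⟩ := hmem
    have h1 : bfun lam r' < bfun lam r := by omega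
    have hrr : r < r' := (bfun_strictAnti lam).lt_iff_gt.mp h1
    have hp : lam.parts (r+1) < lam.parts r := h
    have h2 : bfun lam (r+1) + 2 ≤ bfun lam r := by
      unfold bfun; push_cast; omega
    have h3 : bfun lam (r+1) < bfun lam r' := by omega
    have : r' < r + 1 := (bfun_strictAnti lam).lt_iff_gt.mp h3
    omega
  · intro h
    have hle := lam.antitone r (r+1) (by omega)
    rcases eq_or_lt_of_le hle with heq | hlt
    · exfalso; apply h
      rw [mem_beta_iff]
      refine ⟨r+1, ?_⟩
      unfold bfun; push_cast; omega
    · exact hlt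

lemma addRes_eq (s : ℕ) (lam : Partition') (r : ℕ) :
    addRes s lam r = ((bfun lam r + 1 : ℤ) : ZMod s) := by
  unfold addRes bfun; congr 1; push_cast; ring

lemma remRes_eq (s : ℕ) (lam : Partition') (r : ℕ) :
    remRes s lam r = ((bfun lam r : ℤ) : ZMod s) := rfl

lemma core_iter {s : ℕ} {lam : Partition'} (hcore : IsCore lam s) {x : ℤ}
    (hx : x ∈ betaSet lam) : ∀ k : ℕ, x - k * s ∈ betaSet lam := by
  intro k; induction k with
  | zero => simpa using hx
  | succ k ih =>
    have h := hcore _ ih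
    have heq : x - (k : ℤ) * s - s = x - ((k : ℕ) + 1 : ℕ) * s := by push_cast; ring
    rwa [heq] at h

lemma core_down {s : ℕ} (hs : 0 < s) {lam : Partition'} (hcore : IsCore lam s) {x y : ℤ}
    (hx : x ∈ betaSet lam) (hcong : ((y : ZMod s)) = ((x : ZMod s))) (hle : y ≤ x) :
    y ∈ betaSet lam := by
  have hmod : y ≡ x [ZMOD (s : ℤ)] := (ZMod.intCast_eq_intCast_iff _ _ _).mp hcong
  have hd : (s : ℤ) ∣ x - y := Int.ModEq.dvd hmod
  obtain ⟨k, hk⟩ := hd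
  have hs' : (0 : ℤ) < s := by exact_mod_cast hs
  have hk0 : 0 ≤ k := by nlinarith
  have heq : x - (k.toNat : ℤ) * s = y := by
    rw [Int.toNat_of_nonneg hk0]; linarith [hk]
  have := core_iter hcore hx k.toNat
  rwa [heq] at this

end Stmt17
namespace Stmt17

lemma no_add_rem {s : ℕ} (hs : 2 ≤ s) {lam : Partition'} (hcore : IsCore lam s) (i : ZMod s) :
    ¬((∃ r, AddableAt lam r ∧ addRes s lam r = i) ∧
      (∃ r, RemovableAt lam r ∧ remRes s lam r = i)) := by
  rintro ⟨⟨r, ha, hai⟩, ⟨r', hr, hri⟩⟩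
  rw [addable_iff] at ha
  rw [removable_iff] at hr
  rw [addRes_eq] at hai
  rw [remRes_eq] at hri
  have hs0 : 0 < s := by omega
  -- b r' ≤ b r
  have h1 : bfun lam r' ≤ bfun lam r := by
    by_contra h
    push_neg at h
    exact ha (core_down hs0 hcore (bfun_mem lam r') (by rw [hai, hri]) (by omega))
  -- b r < b r' - 1
  have h2 : bfun lam r < bfun lam r' - 1 := by
    by_contra h
    push_neg at h
    refine hr (core_down hs0 hcore (bfun_mem lam r) ?_ h)
    rw [← hri] at hai
    have : ((bfun lam r' - 1 : ℤ) : ZMod s) = ((bfun lam r' : ℤ) : ZMod s) - 1 := by push_cast; ring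
    rw [this, ← hai]
    push_cast; ring
  omega

lemma bmu_eq {s : ℕ} {i : ZMod s} {lam mu : Partition'} (hmu : SiRel s i lam mu) (r : ℕ) :
    (AddableAt lam r ∧ addRes s lam r = i ∧ bfun mu r = bfun lam r + 1) ∨
    ((RemovableAt lam r ∧ remRes s lam r = i) ∧ bfun mu r = bfun lam r - 1 ∧
      ¬(AddableAt lam r ∧ addRes s lam r = i)) ∨
    (bfun mu r = bfun lam r ∧ ¬(AddableAt lam r ∧ addRes s lam r = i) ∧
      ¬(RemovableAt lam r ∧ remRes s lam r = i)) := by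
  have h := hmu r
  split_ifs at h with h1 h2
  · exact Or.inl ⟨h1.1, h1.2, by unfold bfun; omega⟩
  · refine Or.inr (Or.inl ⟨h2, ?_, h1⟩)
    have hp : lam.parts (r+1) < lam.parts r := h2.1
    unfold bfun; omega
  · exact Or.inr (Or.inr ⟨by unfold bfun; omega, h1, h2⟩)

end Stmt17
namespace Stmt17

lemma swap_mem {s : ℕ} (hs : 2 ≤ s) {i : ZMod s} {lam mu : Partition'}
    (hmu : SiRel s i lam mu) (x : ℤ) :
    x ∈ betaSet mu ↔
      (if ((x : ZMod s)) = i then x - 1 ∈ betaSet lam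
       else if ((x : ZMod s)) = i - 1 then x + 1 ∈ betaSet lam
       else x ∈ betaSet lam) := by
  haveI : Fact (1 < s) := ⟨by omega⟩
  have hone : (1 : ZMod s) ≠ 0 := one_ne_zero
  have hcast1 : ∀ z : ℤ, ((z - 1 : ℤ) : ZMod s) = ((z : ZMod s)) - 1 := by
    intro z; push_cast; ring
  have hcast2 : ∀ z : ℤ, ((z + 1 : ℤ) : ZMod s) = ((z : ZMod s)) + 1 := by
    intro z; push_cast; ring
  constructor
  · intro hx
    rw [mem_beta_iff] at hx
    obtain ⟨r, hr⟩ := hx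
    rcases bmu_eq hmu r with ⟨ha, hai, hb⟩ | ⟨⟨hrm, hri⟩, hb, _⟩ | ⟨hb, hA, hR⟩
    · -- added node: x = b r + 1, cast x = i
      rw [addRes_eq] at hai
      have hxi : ((x : ZMod s)) = i := by rw [← hr, hb]; exact hai
      rw [if_pos hxi]
      have heq : bfun lam r = x - 1 := by omega
      exact heq ▸ bfun_mem lam r
    · -- removed node: x = b r - 1, cast x = i - 1
      rw [remRes_eq] at hri
      have hxi : ((x : ZMod s)) = i - 1 := by
        rw [← hr, hb, hcast1, hri]
      have hni : ((x : ZMod s)) ≠ i := by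
        rw [hxi]; intro h
        exact hone (by linear_combination -h)
      rw [if_neg hni, if_pos hxi]
      have heq : bfun lam r = x + 1 := by omega
      exact heq ▸ bfun_mem lam r
    · -- unchanged: x = b r
      have hbx : bfun lam r = x := by omega
      by_cases h1 : ((x : ZMod s)) = i
      · rw [if_pos h1]
        by_contra hcon
        exact hR ⟨(removable_iff lam r).mpr (by rwa [hbx]),
          by rw [remRes_eq, hbx]; exact h1⟩
      · rw [if_neg h1]
        by_cases h2 : ((x : ZMod s)) = i - 1
        · rw [if_pos h2]
          by_contra hcon
          refine hA ⟨(addable_iff lam r).mpr (by rwa [hbx]), ?_⟩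
          rw [addRes_eq, hbx, hcast2, h2]; ring
        · rw [if_neg h2]
          exact hbx ▸ bfun_mem lam r
  · intro hx
    split_ifs at hx with h1 h2
    · -- cast x = i, x - 1 ∈ B lam
      rw [mem_beta_iff] at hx
      obtain ⟨r, hr⟩ := hx
      by_cases hxB : x ∈ betaSet lam
      · rw [mem_beta_iff] at hxB
        obtain ⟨r', hr'⟩ := hxB
        rcases bmu_eq hmu r' with ⟨ha, hai, hb⟩ | ⟨⟨hrm, hri⟩, hb, _⟩ | ⟨hb, _, _⟩
        · exfalso
          rw [addRes_eq, hr', hcast2, h1] at hai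
          exact hone (by linear_combination hai)
        · exfalso
          rw [removable_iff] at hrm
          exact hrm (by rw [hr']; exact hr ▸ bfun_mem lam r)
        · exact ⟨r', by show bfun mu r' = x; omega⟩
      · rcases bmu_eq hmu r with ⟨ha, hai, hb⟩ | ⟨⟨hrm, hri⟩, hb, _⟩ | ⟨hb, hA, hR⟩
        · exact ⟨r, by show bfun mu r = x; omega⟩
        · exfalso
          rw [remRes_eq, hr, hcast1, h1] at hri
          exact hone (by linear_combination -hri)
        · exfalso
          refine hA ⟨(addable_iff lam r).mpr ?_, ?_⟩
          · rw [hr]; simpa using hxB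
          · rw [addRes_eq, hr]
            have : x - 1 + 1 = x := by ring
            rw [this, h1]
    · -- cast x = i - 1, x + 1 ∈ B lam
      rw [mem_beta_iff] at hx
      obtain ⟨r, hr⟩ := hx
      by_cases hxB : x ∈ betaSet lam
      · rw [mem_beta_iff] at hxB
        obtain ⟨r', hr'⟩ := hxB
        rcases bmu_eq hmu r' with ⟨ha, hai, hb⟩ | ⟨⟨hrm, hri⟩, hb, _⟩ | ⟨hb, _, _⟩
        · exfalso
          rw [addable_iff] at ha
          exact ha (by rw [hr']; exact hr ▸ bfun_mem lam r)
        · exfalso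
          rw [remRes_eq, hr', h2] at hri
          exact hone (by linear_combination -hri)
        · exact ⟨r', by show bfun mu r' = x; omega⟩
      · rcases bmu_eq hmu r with ⟨ha, hai, hb⟩ | ⟨⟨hrm, hri⟩, hb, _⟩ | ⟨hb, hA, hR⟩
        · exfalso
          rw [addRes_eq, hr] at hai
          have : ((x + 1 + 1 : ℤ) : ZMod s) = ((x : ZMod s)) + 1 + 1 := by push_cast; ring
          rw [this, h2] at hai
          exact hone (by linear_combination hai)
        · exact ⟨r, by show bfun mu r = x; omega⟩
        · exfalso
          refine hR ⟨(removable_iff lam r).mpr ?_, ?_⟩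
          · rw [hr]; simpa using hxB
          · rw [remRes_eq, hr, hcast2, h2]; ring
    · -- other residues
      rw [mem_beta_iff] at hx
      obtain ⟨r, hr⟩ := hx
      rcases bmu_eq hmu r with ⟨ha, hai, hb⟩ | ⟨⟨hrm, hri⟩, hb, _⟩ | ⟨hb, _, _⟩
      · exfalso
        rw [addRes_eq, hr, hcast2] at hai
        exact h2 (by linear_combination hai)
      · exfalso
        rw [remRes_eq, hr] at hri
        exact h1 hri
      · exact ⟨r, by show bfun mu r = x; omega⟩

end Stmt17
namespace Stmt17

lemma core_si {s : ℕ} (hs : 2 ≤ s) {i : ZMod s} {lam mu : Partition'}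
    (hcore : IsCore lam s) (hmu : SiRel s i lam mu) : IsCore mu s := by
  intro x hx
  rw [swap_mem hs hmu] at hx ⊢
  have hres : (((x - (s : ℕ) : ℤ)) : ZMod s) = ((x : ZMod s)) := by
    push_cast; simp
  rw [hres]
  split_ifs at hx ⊢ with h1 h2
  · have h := hcore _ hx
    have e : x - (s:ℕ) - 1 = x - 1 - (s:ℕ) := by ring
    rwa [e]
  · have h := hcore _ hx
    have e : x - (s:ℕ) + 1 = x + 1 - (s:ℕ) := by ring
    rwa [e]
  · exact hcore _ hx

lemma si_symm {s : ℕ} (hs : 2 ≤ s) {i : ZMod s} {lam mu : Partition'}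
    (hmu : SiRel s i lam mu) : SiRel s i mu lam := by
  haveI : Fact (1 < s) := ⟨by omega⟩
  have hone : (1 : ZMod s) ≠ 0 := one_ne_zero
  have hne_pred : i - 1 ≠ i := fun hh => hone (by linear_combination -hh)
  have hne_succ : ∀ j : ZMod s, j + 1 ≠ j := fun j hh => hone (by linear_combination hh)
  have hcast1 : ∀ z : ℤ, ((z - 1 : ℤ) : ZMod s) = ((z : ZMod s)) - 1 := by
    intro z; push_cast; ring
  have hcast2 : ∀ z : ℤ, ((z + 1 : ℤ) : ZMod s) = ((z : ZMod s)) + 1 := by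
    intro z; push_cast; ring
  intro r
  rcases bmu_eq hmu r with ⟨ha, hai, hb⟩ | ⟨⟨hrm, hri⟩, hb, _⟩ | ⟨hb, hA, hR⟩
  · -- lam addable-i at r; mu removable-i at r
    have hp : mu.parts r = lam.parts r + 1 := by unfold bfun at hb; omega
    rw [addRes_eq] at hai
    have hcb : ((bfun lam r : ℤ) : ZMod s) = i - 1 := by
      rw [hcast2] at hai
      exact eq_sub_of_add_eq hai
    have hAm : ¬(AddableAt mu r ∧ addRes s mu r = i) := by
      rintro ⟨_, hres⟩
      rw [addRes_eq, hb, hcast2, hai] at hres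
      exact hne_succ i hres
    have hRm : RemovableAt mu r ∧ remRes s mu r = i := by
      constructor
      · rw [removable_iff]
        have e : bfun mu r - 1 = bfun lam r := by omega
        rw [e, swap_mem hs hmu]
        rw [if_neg (by rw [hcb]; exact hne_pred), if_pos hcb]
        exact (addable_iff lam r).mp ha
      · rw [remRes_eq, hb]; exact hai
    rw [if_neg hAm, if_pos hRm]
    omega
  · -- lam removable-i at r; mu addable-i at r
    have hplt : lam.parts (r+1) < lam.parts r := hrm
    have hp : mu.parts r = lam.parts r - 1 := by unfold bfun at hb; omega
    rw [remRes_eq] at hri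
    have hAm : AddableAt mu r ∧ addRes s mu r = i := by
      constructor
      · rw [addable_iff]
        have e : bfun mu r + 1 = bfun lam r := by omega
        rw [e, swap_mem hs hmu, if_pos hri]
        exact (removable_iff lam r).mp hrm
      · rw [addRes_eq]
        have e : bfun mu r + 1 = bfun lam r := by omega
        rw [e]; exact hri
    rw [if_pos hAm]
    omega
  · -- unchanged
    have hp : mu.parts r = lam.parts r := by unfold bfun at hb; omega
    have hAm : ¬(AddableAt mu r ∧ addRes s mu r = i) := by
      rintro ⟨hadd, hres⟩
      rw [addable_iff] at hadd
      apply hadd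
      rw [addRes_eq] at hres
      rw [swap_mem hs hmu, if_pos hres]
      have e : bfun mu r + 1 - 1 = bfun lam r := by omega
      rw [e]; exact bfun_mem lam r
    have hRm : ¬(RemovableAt mu r ∧ remRes s mu r = i) := by
      rintro ⟨hrem, hres⟩
      rw [removable_iff] at hrem
      apply hrem
      rw [remRes_eq, hb] at hres
      have hc : ((bfun mu r - 1 : ℤ) : ZMod s) = i - 1 := by
        rw [hcast1, hb, hres]
      rw [swap_mem hs hmu, if_neg (by rw [hc]; exact hne_pred), if_pos hc]
      have e : bfun mu r - 1 + 1 = bfun lam r := by omega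
      rw [e]; exact bfun_mem lam r
    rw [if_neg hAm, if_neg hRm]
    omega

end Stmt17
namespace Stmt17

def siFun (s : ℕ) (i : ZMod s) (lam : Partition') (r : ℕ) : ℕ :=
  if AddableAt lam r ∧ addRes s lam r = i then lam.parts r + 1
  else if RemovableAt lam r ∧ remRes s lam r = i then lam.parts r - 1
  else lam.parts r

lemma siFun_succ_le {s : ℕ} (hs : 2 ≤ s) (i : ZMod s) (lam : Partition') (r : ℕ) :
    siFun s i lam (r + 1) ≤ siFun s i lam r := by
  have hmono := lam.antitone r (r+1) (by omega)
  unfold siFun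
  by_cases hA1 : AddableAt lam (r+1) ∧ addRes s lam (r+1) = i
  · rw [if_pos hA1]
    have hlt : lam.parts (r+1) < lam.parts r := by
      rcases hA1.1 with h0 | hh
      · omega
      · simpa using hh
    by_cases hA0 : AddableAt lam r ∧ addRes s lam r = i
    · rw [if_pos hA0]; omega
    · rw [if_neg hA0]
      by_cases hR0 : RemovableAt lam r ∧ remRes s lam r = i
      · rw [if_pos hR0]
        have h1 : ((bfun lam (r+1) + 1 : ℤ) : ZMod s) = ((bfun lam r : ℤ) : ZMod s) := by
          rw [← addRes_eq, ← remRes_eq, hA1.2, hR0.2]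
        obtain ⟨k, hk⟩ := Int.ModEq.dvd ((ZMod.intCast_eq_intCast_iff _ _ _).mp h1)
        have hb2 : bfun lam (r+1) + 2 ≤ bfun lam r := by
          unfold bfun; push_cast; omega
        have hs' : (2:ℤ) ≤ (s:ℤ) := by exact_mod_cast hs
        have hk1 : 1 ≤ k := by
          by_contra hcon
          push_neg at hcon
          have hkn : (s:ℤ) * k ≤ 0 :=
            mul_nonpos_of_nonneg_of_nonpos (by linarith) (by omega)
          linarith
        have hsle : (s:ℤ) ≤ bfun lam r - (bfun lam (r+1) + 1) := by
          nlinarith [mul_nonneg (show (0:ℤ) ≤ (s:ℤ) by linarith)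
            (show (0:ℤ) ≤ k - 1 by linarith)]
        have hfin : (lam.parts (r+1) : ℤ) + s ≤ (lam.parts r : ℤ) := by
          unfold bfun at hsle; push_cast at hsle; omega
        omega
      · rw [if_neg hR0]; omega
  · rw [if_neg hA1]
    by_cases hR1 : RemovableAt lam (r+1) ∧ remRes s lam (r+1) = i
    · rw [if_pos hR1]
      split_ifs <;> omega
    · rw [if_neg hR1]
      by_cases hA0 : AddableAt lam r ∧ addRes s lam r = i
      · rw [if_pos hA0]; omega
      · rw [if_neg hA0]
        by_cases hR0 : RemovableAt lam r ∧ remRes s lam r = i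
        · rw [if_pos hR0]
          have hlt : lam.parts (r+1) < lam.parts r := hR0.1
          omega
        · rw [if_neg hR0]; omega

lemma siFun_support (s : ℕ) (i : ZMod s) (lam : Partition') :
    ∃ N : ℕ, ∀ r : ℕ, N ≤ r → siFun s i lam r = 0 := by
  obtain ⟨N, hN⟩ := lam.finite_support
  refine ⟨N + 1, fun r hr => ?_⟩
  have h0 : lam.parts r = 0 := hN r (by omega)
  have h1 : lam.parts (r - 1) = 0 := hN (r-1) (by omega)
  have h2 : lam.parts (r + 1) = 0 := hN (r+1) (by omega)
  unfold siFun
  rw [if_neg, if_neg]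
  · exact h0
  · rintro ⟨hh, -⟩
    unfold RemovableAt at hh; omega
  · rintro ⟨hh, -⟩
    unfold AddableAt at hh
    rcases hh with hh | hh <;> omega

lemma exists_si (s : ℕ) (hs : 2 ≤ s) (i : ZMod s) (lam : Partition') :
    ∃ mu : Partition', SiRel s i lam mu :=
  ⟨⟨siFun s i lam,
    fun a b hab => (antitone_nat_of_succ_le (siFun_succ_le hs i lam)) hab,
    siFun_support s i lam⟩, fun _ => rfl⟩

noncomputable def sz (lam : Partition') : ℕ :=
  ∑ r ∈ Finset.range (Classical.choose lam.finite_support), lam.parts r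

lemma sum_stable (lam : Partition') {a b : ℕ} (hab : a ≤ b)
    (h0 : ∀ r, a ≤ r → lam.parts r = 0) :
    ∑ r ∈ Finset.range a, lam.parts r = ∑ r ∈ Finset.range b, lam.parts r := by
  apply Finset.sum_subset (Finset.range_subset_range.mpr hab)
  intro x _ hx
  exact h0 x (by simp [Finset.mem_range] at hx; omega)

lemma sz_eq (lam : Partition') (M : ℕ) (hM : ∀ r, M ≤ r → lam.parts r = 0) :
    sz lam = ∑ r ∈ Finset.range M, lam.parts r := by
  have hN := Classical.choose_spec lam.finite_support
  unfold sz
  set N := Classical.choose lam.finite_support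
  rw [sum_stable lam (le_max_left N M) hN,
      sum_stable lam (le_max_right N M) hM]

lemma sz_lt {lam mu : Partition'} (hle : ∀ r, mu.parts r ≤ lam.parts r) {k : ℕ}
    (hlt : mu.parts k < lam.parts k) : sz mu < sz lam := by
  obtain ⟨N1, h1⟩ := lam.finite_support
  obtain ⟨N2, h2⟩ := mu.finite_support
  set M := max (max N1 N2) (k+1) with hM
  rw [sz_eq lam M (fun r hr => h1 r (by omega)),
      sz_eq mu M (fun r hr => h2 r (by omega))]
  apply Finset.sum_lt_sum
  · intro j _; exact hle j
  · exact ⟨k, Finset.mem_range.mpr (by omega), hlt⟩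

lemma parts_eq_zero_of_sz {lam : Partition'} (h : sz lam = 0) (r : ℕ) :
    lam.parts r = 0 := by
  have hN := Classical.choose_spec lam.finite_support
  unfold sz at h
  set N := Classical.choose lam.finite_support
  by_cases hr : r < N
  · exact Finset.sum_eq_zero_iff.mp h r (Finset.mem_range.mpr hr)
  · exact hN r (by omega)

lemma part_ext {lam mu : Partition'} (h : lam.parts = mu.parts) : lam = mu := by
  cases lam; cases mu
  simp only at h
  cases h
  rfl

lemma empty_core (s : ℕ) : IsCore emptyPartition s := by
  intro x hx
  rw [mem_beta_iff] at hx ⊢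
  obtain ⟨r, hr⟩ := hx
  refine ⟨r + s, ?_⟩
  unfold bfun emptyPartition at *
  simp only at hr ⊢
  push_cast at hr ⊢
  omega

lemma reach_snoc {s : ℕ} {a b c : Partition'} (h : Reach s a b) (i : ZMod s)
    (hbc : SiRel s i b c) : Reach s a c := by
  induction h with
  | refl lam => exact Reach.step i hbc (Reach.refl c)
  | step j hj _ ih => exact Reach.step j hj (ih hbc)

lemma reach_core {s : ℕ} (hs : 2 ≤ s) {a b : Partition'} (h : Reach s a b) :
    IsCore a s → IsCore b s := by
  induction h with
  | refl lam => exact id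
  | step j hj _ ih => exact fun ha => ih (core_si hs ha hj)

lemma core_reach {s : ℕ} (hs : 2 ≤ s) (lam : Partition') (hcore : IsCore lam s) :
    Reach s emptyPartition lam := by
  generalize hn : sz lam = n
  induction n using Nat.strong_induction_on generalizing lam with
  | _ n ih =>
  by_cases h0 : sz lam = 0
  · have : lam = emptyPartition := part_ext (funext fun r => by
      rw [parts_eq_zero_of_sz h0 r]; rfl)
    rw [this]
    exact Reach.refl _
  · have hex : ∃ m, lam.parts m = 0 := by
      obtain ⟨N, hN⟩ := lam.finite_support
      exact ⟨N, hN N le_rfl⟩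
    have hm0 : lam.parts (Nat.find hex) = 0 := Nat.find_spec hex
    have hmpos : Nat.find hex ≠ 0 := by
      intro hzero
      apply h0
      unfold sz
      apply Finset.sum_eq_zero
      intro r _
      have := lam.antitone 0 r (by omega)
      rw [hzero] at hm0
      omega
    obtain ⟨k, hk⟩ : ∃ k, Nat.find hex = k + 1 := ⟨Nat.find hex - 1, by omega⟩
    have hkpos : lam.parts k ≠ 0 := Nat.find_min hex (by omega)
    have hrem : RemovableAt lam k := by
      unfold RemovableAt
      rw [← hk]
      omega
    obtain ⟨mu, hmu⟩ := exists_si s hs (remRes s lam k) lam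
    have hnoadd : ∀ r, ¬(AddableAt lam r ∧ addRes s lam r = remRes s lam k) := by
      intro r hr
      exact no_add_rem hs hcore (remRes s lam k) ⟨⟨r, hr⟩, ⟨k, hrem, rfl⟩⟩
    have hle : ∀ r, mu.parts r ≤ lam.parts r := by
      intro r
      rw [hmu r, if_neg (hnoadd r)]
      split_ifs <;> omega
    have hlt : mu.parts k < lam.parts k := by
      rw [hmu k, if_neg (hnoadd k), if_pos ⟨hrem, rfl⟩]
      have := hrem
      unfold RemovableAt at this
      omega
    have hmucore := core_si hs hcore hmu
    exact reach_snoc (ih (sz mu) (by rw [← hn]; exact sz_lt hle hlt) mu hmucore rfl)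
      (remRes s lam k) (si_symm hs hmu)

end Stmt17

/-- for `s ≥ 2`, (1) an `s`-core never has both an addable and a
removable node of the same residue `i`; (2) applying `s_i` to an `s`-core yields
an `s`-core; (3) the set of `s`-cores is precisely the orbit of the empty
partition under the operators `s_i`. -/
theorem stmt_17 (s : ℕ) (hs : 2 ≤ s) :
    (∀ lam : Partition', IsCore lam s → ∀ i : ZMod s,
      ¬((∃ r, AddableAt lam r ∧ addRes s lam r = i) ∧
        (∃ r, RemovableAt lam r ∧ remRes s lam r = i))) ∧
    (∀ (lam mu : Partition') (i : ZMod s),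
      IsCore lam s → SiRel s i lam mu → IsCore mu s) ∧
    (∀ lam : Partition', IsCore lam s ↔ Reach s emptyPartition lam) := by
  refine ⟨fun lam hc i => Stmt17.no_add_rem hs hc i,
          fun lam mu i hc hsi => Stmt17.core_si hs hc hsi,
          fun lam => ⟨fun hc => Stmt17.core_reach hs lam hc,
                      fun hr => Stmt17.reach_core hs hr (Stmt17.empty_core s)⟩⟩
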